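/- Let m_i be a restriction-reducing i-coordinate measure (satisfying properties (1) and (2) of Fact 3.3's hypotheses), and suppose min{m_i(x ↦ x_i), m_i(x ↦ ¬x_i)} = r. Then for every boolean function f, δ_i(f)·2^{−m_i(f)} ≤ 2^{−r}·Inf_i[f]. -/

import Mathlib

open Finset
open scoped Classical

namespace BF

noncomputable section

/-- flip the bits of `x` belonging to `B`. -/
def flipS {n : ℕ} (x : Fin n → Bool) (B : Finset (Fin n)) : Fin n → Bool :=
  fun i => if i ∈ B then !(x i) else x i

/-- flip the `i`-th bit of `x`. -/
def flip1 {n : ℕ} (x : Fin n → Bool) (i : Fin n) : Fin n → Bool :=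
  fun j => if j = i then !(x j) else x j

/-- real value of a boolean. -/
def bval (b : Bool) : ℝ := if b then 1 else 0

/-- coefficient of the monomial `∏_{i ∈ S} x_i` in the unique multilinear
real polynomial expansion of `f` (Möbius inversion over the subcube lattice). -/
def coeffS {n : ℕ} (f : (Fin n → Bool) → ℝ) (S : Finset (Fin n)) : ℝ :=
  ∑ T ∈ S.powerset, (-1 : ℝ) ^ (S.card - T.card) * f (fun i => decide (i ∈ T))

/-- degree of the multilinear expansion of a real-valued function on the cube. -/
def degF {n : ℕ} (f : (Fin n → Bool) → ℝ) : ℕ :=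
  (Finset.univ.filter fun S : Finset (Fin n) => coeffS f S ≠ 0).sup Finset.card

/-- degree of a boolean function. -/
def degB {n : ℕ} (f : (Fin n → Bool) → Bool) : ℕ := degF (fun x => bval (f x))

/-- block sensitivity of `f` at `x`. -/
def bsAt {n : ℕ} (f : (Fin n → Bool) → Bool) (x : Fin n → Bool) : ℕ :=
  (Finset.univ.filter fun 𝓑 : Finset (Finset (Fin n)) =>
      (∀ B ∈ 𝓑, f (flipS x B) ≠ f x) ∧
      ∀ A ∈ 𝓑, ∀ B ∈ 𝓑, A ≠ B → Disjoint A B).sup Finset.card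

/-- block sensitivity of `f`. -/
def bs {n : ℕ} (f : (Fin n → Bool) → Bool) : ℕ := Finset.univ.sup (bsAt f)

/-- sensitivity of `f` at `x`. -/
def sx {n : ℕ} (f : (Fin n → Bool) → Bool) (x : Fin n → Bool) : ℕ :=
  (Finset.univ.filter fun i => f (flip1 x i) ≠ f x).card

/-- (maximum) sensitivity of `f`. -/
def sens {n : ℕ} (f : (Fin n → Bool) → Bool) : ℕ := Finset.univ.sup (sx f)

/-- coordinate `i` is relevant for `f`. -/
def Rel {n : ℕ} (i : Fin n) (f : (Fin n → Bool) → Bool) : Prop :=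
  ∃ x, f (flip1 x i) ≠ f x

/-- the set of relevant coordinates of `f`. -/
def relSet {n : ℕ} (f : (Fin n → Bool) → Bool) : Finset (Fin n) :=
  Finset.univ.filter fun i => Rel i f

/-- the number of relevant variables `n(f)`. -/
def nrel {n : ℕ} (f : (Fin n → Bool) → Bool) : ℕ := (relSet f).card

/-- influence of coordinate `i` on `f` (uniform distribution). -/
def infl {n : ℕ} (f : (Fin n → Bool) → Bool) (i : Fin n) : ℝ :=
  ((Finset.univ.filter fun x : Fin n → Bool => f x ≠ f (flip1 x i)).card : ℝ) / 2 ^ n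

/-- total influence `I[f]`. -/
def totalInf {n : ℕ} (f : (Fin n → Bool) → Bool) : ℝ := ∑ i, infl f i

/-- restriction of `f` fixing the coordinates in `H` according to `α`
(viewed as a function on the full cube not depending on the coordinates in `H`). -/
def restrict {n : ℕ} (f : (Fin n → Bool) → Bool) (H : Finset (Fin n))
    (α : Fin n → Bool) : (Fin n → Bool) → Bool :=
  fun x => f (fun i => if i ∈ H then α i else x i)

/-- certificate complexity of `f` at `x`. -/
def certAt {n : ℕ} (f : (Fin n → Bool) → Bool) (x : Fin n → Bool) : ℕ :=
  sInf {k | ∃ S : Finset (Fin n), S.card = k ∧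
    ∀ y, (∀ i ∈ S, y i = x i) → f y = f x}

/-- certificate complexity `C(f)`. -/
def certC {n : ℕ} (f : (Fin n → Bool) → Bool) : ℕ := Finset.univ.sup (certAt f)

/-- `f` is in standard form: `f(0) = 0` and `f(e_i) = 1` for every basis vector. -/
def stdForm {b : ℕ} (f : (Fin b → Bool) → Bool) : Prop :=
  f (fun _ => false) = false ∧ ∀ i : Fin b, f (fun j => decide (j = i)) = true

end

end BF

open BF

/-- the indicator `δ_i(g)` of relevance of coordinate `i`. -/
noncomputable def delta {n : ℕ} (i : Fin n) (g : (Fin n → Bool) → Bool) : ℝ :=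
  if Rel i g then 1 else 0


section Stmt13Aux

open Finset
variable {n : ℕ}

lemma aux_restrict_apply (f : (Fin n → Bool) → Bool) (j : Fin n) (b : Bool)
    (x : Fin n → Bool) :
    restrict f {j} (fun _ => b) x = f (fun k => if k = j then b else x k) := by
  simp only [BF.restrict, Finset.mem_singleton]

lemma aux_restrict_congr (f : (Fin n → Bool) → Bool) (j : Fin n) (b : Bool)
    {x y : Fin n → Bool} (h : ∀ k, k ≠ j → x k = y k) :
    restrict f {j} (fun _ => b) x = restrict f {j} (fun _ => b) y := by
  rw [aux_restrict_apply, aux_restrict_apply]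
  congr 1; funext k
  by_cases hk : k = j
  · simp [hk]
  · simp [hk, h k hk]

lemma aux_restrict_eq_self (f : (Fin n → Bool) → Bool) (j : Fin n) (b : Bool)
    (x : Fin n → Bool) (hx : x j = b) :
    restrict f {j} (fun _ => b) x = f x := by
  rw [aux_restrict_apply]
  congr 1; funext k
  by_cases hk : k = j
  · subst hk; simp [hx]
  · simp [hk]

lemma aux_flip1_flip1 (x : Fin n → Bool) (j : Fin n) : flip1 (flip1 x j) j = x := by
  funext l
  by_cases hl : l = j <;> simp [flip1, hl]

lemma aux_rel_of_rel_restrict (f : (Fin n → Bool) → Bool) (j k : Fin n) (b : Bool)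
    (hkj : k ≠ j) (h : Rel k (restrict f {j} (fun _ => b))) : Rel k f := by
  obtain ⟨x, hx⟩ := h
  set x' : Fin n → Bool := fun l => if l = j then b else x l with hx'def
  have hx'j : x' j = b := by simp [hx'def]
  have e1 : f x' = restrict f {j} (fun _ => b) x := by
    rw [← aux_restrict_eq_self f j b x' hx'j]
    exact aux_restrict_congr f j b (fun l hl => by simp [hx'def, hl])
  have hfj : (flip1 x' k) j = b := by
    simp [flip1, (Ne.symm hkj : j ≠ k), hx'j]
  have e2 : f (flip1 x' k) = restrict f {j} (fun _ => b) (flip1 x k) := by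
    rw [← aux_restrict_eq_self f j b (flip1 x' k) hfj]
    refine aux_restrict_congr f j b (fun l hl => ?_)
    simp [flip1, hx'def, hl]
  refine ⟨x', ?_⟩
  rw [e1, e2]
  exact hx

lemma aux_not_rel_j (f : (Fin n → Bool) → Bool) (j : Fin n) (b : Bool) :
    ¬ Rel j (restrict f {j} (fun _ => b)) := by
  rintro ⟨x, hx⟩
  exact hx (aux_restrict_congr f j b (fun l hl => by simp [flip1, hl]))

lemma aux_rel_i_restrict (f : (Fin n → Bool) → Bool) (i j : Fin n) (hij : j ≠ i)
    (h : Rel i f) :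
    Rel i (restrict f {j} (fun _ => false)) ∨ Rel i (restrict f {j} (fun _ => true)) := by
  obtain ⟨x, hx⟩ := h
  have hj : (flip1 x i) j = x j := by simp [flip1, hij]
  have key : Rel i (restrict f {j} (fun _ => x j)) := by
    refine ⟨x, ?_⟩
    rw [aux_restrict_eq_self f j (x j) x rfl, aux_restrict_eq_self f j (x j) _ hj]
    exact hx
  cases hxj : x j
  · left; rwa [hxj] at key
  · right; rwa [hxj] at key

lemma aux_relSet_lt (f : (Fin n → Bool) → Bool) (j : Fin n) (hj : Rel j f) (b : Bool) :
    (relSet (restrict f {j} (fun _ => b))).card < (relSet f).card := by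
  apply Finset.card_lt_card
  constructor
  · intro k hk
    simp only [relSet, Finset.mem_filter, Finset.mem_univ, true_and] at hk ⊢
    have hkj : k ≠ j := by
      rintro rfl; exact aux_not_rel_j f k b hk
    exact aux_rel_of_rel_restrict f j k b hkj hk
  · intro hsub
    have : j ∈ relSet (restrict f {j} (fun _ => b)) := by
      apply hsub; simp only [relSet, Finset.mem_filter, Finset.mem_univ, true_and]; exact hj
    simp only [relSet, Finset.mem_filter, Finset.mem_univ, true_and] at this
    exact aux_not_rel_j f j b this

lemma aux_infl_nonneg (f : (Fin n → Bool) → Bool) (i : Fin n) : 0 ≤ infl f i := by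
  unfold infl; positivity

lemma aux_infl_split (f : (Fin n → Bool) → Bool) (i j : Fin n) (hij : j ≠ i) :
    infl (restrict f {j} (fun _ => false)) i + infl (restrict f {j} (fun _ => true)) i
      ≤ 2 * infl f i := by
  classical
  set S : Finset (Fin n → Bool) :=
    Finset.univ.filter fun x => f x ≠ f (flip1 x i) with hS
  set S0 : Finset (Fin n → Bool) :=
    Finset.univ.filter fun x => restrict f {j} (fun _ => false) x
      ≠ restrict f {j} (fun _ => false) (flip1 x i) with hS0
  set S1 : Finset (Fin n → Bool) :=
    Finset.univ.filter fun x => restrict f {j} (fun _ => true) x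
      ≠ restrict f {j} (fun _ => true) (flip1 x i) with hS1
  have key : ∀ b : Bool,
      (Finset.univ.filter fun x => restrict f {j} (fun _ => b) x
        ≠ restrict f {j} (fun _ => b) (flip1 x i)).card
      ≤ 2 * ((Finset.univ.filter fun x => restrict f {j} (fun _ => b) x
        ≠ restrict f {j} (fun _ => b) (flip1 x i)).filter fun x => x j = b).card := by
    intro b
    set Sb : Finset (Fin n → Bool) :=
      Finset.univ.filter fun x => restrict f {j} (fun _ => b) x
        ≠ restrict f {j} (fun _ => b) (flip1 x i) with hSb
    set Tb := Sb.filter fun x => x j = b with hTb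
    have hsplit : Sb.card = Tb.card + (Sb.filter fun x => ¬ (x j = b)).card := by
      rw [hTb]; exact (Finset.card_filter_add_card_filter_not ..).symm
    have hinj : (Sb.filter fun x => ¬ (x j = b)).card ≤ Tb.card := by
      apply Finset.card_le_card_of_injOn (fun x => flip1 x j)
      · intro x hx
        simp only [Finset.mem_coe, Finset.mem_filter, Finset.mem_univ, true_and, hSb, hTb]
          at hx ⊢
        obtain ⟨hx1, hx2⟩ := hx
        have hxjb : x j = !b := by cases hb : x j <;> cases b <;> simp_all
        have hfj : (flip1 x j) j = b := by simp [flip1, hxjb]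
        refine ⟨?_, hfj⟩
        have e1 : restrict f {j} (fun _ => b) (flip1 x j)
            = restrict f {j} (fun _ => b) x :=
          aux_restrict_congr f j b (fun l hl => by simp [flip1, hl])
        have e2 : restrict f {j} (fun _ => b) (flip1 (flip1 x j) i)
            = restrict f {j} (fun _ => b) (flip1 x i) := by
          refine aux_restrict_congr f j b (fun l hl => ?_)
          by_cases hli : l = i <;> simp [flip1, hli, hl, Ne.symm hij]
        rw [e1, e2]; exact hx1
      · intro x _ y _ hxy
        have h := congrArg (fun z => flip1 z j) hxy
        simpa [aux_flip1_flip1] using h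
    linarith
  have hT0 : (S0.filter fun x => x j = false) ⊆ S := by
    intro x hx
    simp only [hS0, hS, Finset.mem_filter, Finset.mem_univ, true_and] at hx ⊢
    obtain ⟨hx1, hx2⟩ := hx
    have hj2 : (flip1 x i) j = false := by simp [flip1, hij, hx2]
    rwa [aux_restrict_eq_self f j false x hx2, aux_restrict_eq_self f j false _ hj2] at hx1
  have hT1 : (S1.filter fun x => x j = true) ⊆ S := by
    intro x hx
    simp only [hS1, hS, Finset.mem_filter, Finset.mem_univ, true_and] at hx ⊢
    obtain ⟨hx1, hx2⟩ := hx
    have hj2 : (flip1 x i) j = true := by simp [flip1, hij, hx2]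
    rwa [aux_restrict_eq_self f j true x hx2, aux_restrict_eq_self f j true _ hj2] at hx1
  have hdisj : Disjoint (S0.filter fun x => x j = false) (S1.filter fun x => x j = true) := by
    apply Finset.disjoint_left.mpr
    intro x hx hy
    simp only [Finset.mem_filter] at hx hy
    rw [hx.2] at hy; exact Bool.false_ne_true hy.2
  have hcards : S0.card + S1.card ≤ 2 * S.card := by
    have h0 := key false
    have h1 := key true
    have hu : (S0.filter fun x => x j = false).card + (S1.filter fun x => x j = true).card
        ≤ S.card := by
      rw [← Finset.card_union_of_disjoint hdisj]
      exact Finset.card_le_card (Finset.union_subset hT0 hT1)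
    rw [← hS0] at h0
    rw [← hS1] at h1
    linarith
  have hpow : (0:ℝ) < 2 ^ n := by positivity
  unfold infl
  rw [← add_div, div_le_iff₀ hpow]
  calc ((S0.card : ℝ) + S1.card) ≤ (2 * S.card : ℕ) := by exact_mod_cast hcards
    _ = 2 * (S.card : ℝ) := by push_cast; ring
    _ = 2 * ((S.card : ℝ) / 2 ^ n) * 2 ^ n := by field_simp
  
lemma aux_infl_dict (i : Fin n) : infl (fun x : Fin n → Bool => x i) i = 1 := by
  unfold infl
  rw [Finset.filter_true_of_mem (fun x _ => by cases h : x i <;> simp [flip1, h])]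
  rw [Finset.card_univ]
  have : Fintype.card (Fin n → Bool) = 2 ^ n := by
    simp [Fintype.card_fun]
  rw [this]
  have hpow : (0:ℝ) < 2 ^ n := by positivity
  field_simp
  norm_num

lemma aux_infl_antidict (i : Fin n) : infl (fun x : Fin n → Bool => !(x i)) i = 1 := by
  unfold infl
  rw [Finset.filter_true_of_mem (fun x _ => by cases h : x i <;> simp [flip1, h])]
  rw [Finset.card_univ]
  have : Fintype.card (Fin n → Bool) = 2 ^ n := by
    simp [Fintype.card_fun]
  rw [this]
  have hpow : (0:ℝ) < 2 ^ n := by positivity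
  field_simp
  norm_num

lemma aux_dict_classify (f : (Fin n → Bool) → Bool) (i : Fin n) (hrel : Rel i f)
    (hirr : ∀ j, j ≠ i → ¬ Rel j f) :
    (f = fun x => x i) ∨ (f = fun x => !(x i)) := by
  have hflip : ∀ j, j ≠ i → ∀ x, f (flip1 x j) = f x := by
    intro j hj x
    by_contra hcon
    exact hirr j hj ⟨x, hcon⟩
  have key : ∀ (D : Finset (Fin n)) (x : Fin n → Bool),
      (∀ k, k ∉ D → k ≠ i → x k = false) →
      f x = f (fun k => if k = i then x i else false) := by
    intro D
    induction D using Finset.induction_on with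
    | empty =>
      intro x hx
      congr 1; funext k
      by_cases hk : k = i
      · simp [hk]
      · simp [hk, hx k (Finset.notMem_empty k) hk]
    | @insert a D _ ih =>
      intro x hx
      by_cases hai : a = i
      · apply ih
        intro k hk hki
        apply hx k _ hki
        simp only [Finset.mem_insert, not_or]
        exact ⟨fun h => hki (h.trans hai), hk⟩
      · cases hxa : x a
        · apply ih
          intro k hk hki
          by_cases hka : k = a
          · rw [hka]; exact hxa
          · exact hx k (by simp [Finset.mem_insert, hka, hk]) hki
        · have h1 : f x = f (flip1 x a) := (hflip a hai x).symm
          have h2 : f (flip1 x a) = f (fun k => if k = i then (flip1 x a) i else false) := by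
            apply ih
            intro k hk hki
            by_cases hka : k = a
            · subst hka; simp [flip1, hxa]
            · simp only [flip1, if_neg hka]
              exact hx k (by simp [Finset.mem_insert, hka, hk]) hki
          have h3 : (flip1 x a) i = x i := by simp [flip1, show i ≠ a from fun h => hai h.symm]
          rw [h1, h2, h3]
  have hx : ∀ x, f x = f (fun k => if k = i then x i else false) := fun x =>
    key Finset.univ x (fun k hk _ => absurd (Finset.mem_univ k) hk)
  set pat : Bool → (Fin n → Bool) := fun b k => if k = i then b else false with hpat
  have hne : f (pat true) ≠ f (pat false) := by
    obtain ⟨x, hxx⟩ := hrel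
    have e1 : f x = f (pat (x i)) := hx x
    have hfi : (flip1 x i) i = !(x i) := by simp [flip1]
    have e2 : f (flip1 x i) = f (pat (!(x i))) := by
      rw [hx (flip1 x i), hfi]
    intro hcon
    apply hxx
    rw [e1, e2]
    cases hb : x i
    · simpa using hcon
    · simpa using hcon.symm
  cases ht : f (pat true) <;> cases hf : f (pat false)
  · rw [ht, hf] at hne; exact absurd rfl hne
  · right
    funext x
    rw [hx x]
    cases hxi : x i
    · simpa [hpat] using hf
    · simpa [hpat] using ht
  · left
    funext x
    rw [hx x]
    cases hxi : x i
    · simpa [hpat] using hf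
    · simpa [hpat] using ht
  · rw [ht, hf] at hne; exact absurd rfl hne

end Stmt13Aux

lemma stmt13_main {n : ℕ} (i : Fin n) (m : ((Fin n → Bool) → Bool) → ℝ)
    (h1 : ∀ g : (Fin n → Bool) → Bool, ∀ j : Fin n, j ≠ i → ∀ b : Bool,
      m (restrict g {j} (fun _ => b)) ≤ m g)
    (h2 : ∀ g : (Fin n → Bool) → Bool, ∀ j : Fin n, j ≠ i → ∀ b : Bool,
      Rel i g → ¬ Rel i (restrict g {j} (fun _ => b)) →
      m (restrict g {j} (fun _ => !b)) ≤ m g - 1)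
    (r : ℝ)
    (hr : r = min (m (fun x => x i)) (m (fun x => !(x i)))) :
    ∀ (N : ℕ) (f : (Fin n → Bool) → Bool), (relSet f).card ≤ N → Rel i f →
      (2 : ℝ) ^ (-(m f)) ≤ (2 : ℝ) ^ (-r) * infl f i := by
  intro N
  induction N with
  | zero =>
    intro f hN hrel
    exfalso
    have : i ∈ relSet f := by
      simp only [relSet, Finset.mem_filter, Finset.mem_univ, true_and]; exact hrel
    have := Finset.card_pos.mpr ⟨i, this⟩
    omega
  | succ N ih =>
    intro f hN hrel
    by_cases hbase : ∀ j, j ≠ i → ¬ Rel j f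
    · -- base case: f is a dictator or anti-dictator
      rcases aux_dict_classify f i hrel hbase with hd | hd
      · have hmr : r ≤ m f := by rw [hr, hd]; exact min_le_left _ _
        have hI : infl f i = 1 := by rw [hd]; exact aux_infl_dict i
        rw [hI, mul_one]
        exact Real.rpow_le_rpow_of_exponent_le one_le_two (by linarith)
      · have hmr : r ≤ m f := by rw [hr, hd]; exact min_le_right _ _
        have hI : infl f i = 1 := by rw [hd]; exact aux_infl_antidict i
        rw [hI, mul_one]
        exact Real.rpow_le_rpow_of_exponent_le one_le_two (by linarith)
    · push_neg at hbase
      obtain ⟨j, hji, hjrel⟩ := hbase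
      have hcard : ∀ b : Bool, (relSet (restrict f {j} (fun _ => b))).card ≤ N := by
        intro b
        have := aux_relSet_lt f j hjrel b
        omega
      have hsplit := aux_infl_split f i j hji
      have hrnn : (0:ℝ) < (2:ℝ) ^ (-r) := Real.rpow_pos_of_pos (by norm_num) _
      by_cases h0 : Rel i (restrict f {j} (fun _ => false)) <;>
        by_cases hh1 : Rel i (restrict f {j} (fun _ => true))
      · -- both relevant
        have A0 := ih (restrict f {j} (fun _ => false)) (hcard false) h0
        have A1 := ih (restrict f {j} (fun _ => true)) (hcard true) hh1
        have m0 := h1 f j hji false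
        have m1 := h1 f j hji true
        have B0 : (2:ℝ) ^ (-(m f)) ≤ (2:ℝ) ^ (-r) * infl (restrict f {j} (fun _ => false)) i :=
          le_trans (Real.rpow_le_rpow_of_exponent_le one_le_two (by linarith)) A0
        have B1 : (2:ℝ) ^ (-(m f)) ≤ (2:ℝ) ^ (-r) * infl (restrict f {j} (fun _ => true)) i :=
          le_trans (Real.rpow_le_rpow_of_exponent_le one_le_two (by linarith)) A1
        nlinarith [aux_infl_nonneg f i]
      · -- false relevant, true not
        have A0 := ih (restrict f {j} (fun _ => false)) (hcard false) h0
        have hm := h2 f j hji true hrel hh1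
        have hm' : m (restrict f {j} (fun _ => false)) ≤ m f - 1 := hm
        have B0 : (2:ℝ) ^ (-(m f)) ≤ (2:ℝ) ^ (-(m (restrict f {j} (fun _ => false))) + (-1)) :=
          Real.rpow_le_rpow_of_exponent_le one_le_two (by linarith)
        rw [Real.rpow_add (by norm_num : (0:ℝ) < 2)] at B0
        have h2inv : (2:ℝ) ^ (-(1:ℝ)) = 1/2 := by
          rw [Real.rpow_neg_one]; norm_num
        rw [h2inv] at B0
        have hI1 := aux_infl_nonneg (restrict f {j} (fun _ => true)) i
        nlinarith
      · -- true relevant, false not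
        have A1 := ih (restrict f {j} (fun _ => true)) (hcard true) hh1
        have hm := h2 f j hji false hrel h0
        have hm' : m (restrict f {j} (fun _ => true)) ≤ m f - 1 := hm
        have B1 : (2:ℝ) ^ (-(m f)) ≤ (2:ℝ) ^ (-(m (restrict f {j} (fun _ => true))) + (-1)) :=
          Real.rpow_le_rpow_of_exponent_le one_le_two (by linarith)
        rw [Real.rpow_add (by norm_num : (0:ℝ) < 2)] at B1
        have h2inv : (2:ℝ) ^ (-(1:ℝ)) = 1/2 := by
          rw [Real.rpow_neg_one]; norm_num
        rw [h2inv] at B1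
        have hI0 := aux_infl_nonneg (restrict f {j} (fun _ => false)) i
        nlinarith
      · -- neither: contradiction
        rcases aux_rel_i_restrict f i j hji hrel with h | h
        · exact absurd h h0
        · exact absurd h hh1


/-- for a restriction-reducing `i`-coordinate measure `m` with
`r = min{m(dictator_i), m(anti-dictator_i)}`, every `f` satisfies
`δ_i(f)·2^{−m(f)} ≤ 2^{−r}·Inf_i[f]`. -/
theorem stmt13 {n : ℕ} (i : Fin n) (m : ((Fin n → Bool) → Bool) → ℝ)
    (hmeas : ∀ g : (Fin n → Bool) → Bool, ¬ Rel i g → m g = 0)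
    (h1 : ∀ g : (Fin n → Bool) → Bool, ∀ j : Fin n, j ≠ i → ∀ b : Bool,
      m (restrict g {j} (fun _ => b)) ≤ m g)
    (h2 : ∀ g : (Fin n → Bool) → Bool, ∀ j : Fin n, j ≠ i → ∀ b : Bool,
      Rel i g → ¬ Rel i (restrict g {j} (fun _ => b)) →
      m (restrict g {j} (fun _ => !b)) ≤ m g - 1)
    (r : ℝ)
    (hr : r = min (m (fun x => x i)) (m (fun x => !(x i))))
    (f : (Fin n → Bool) → Bool) :
    delta i f * (2 : ℝ) ^ (-(m f)) ≤ (2 : ℝ) ^ (-r) * infl f i := by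
  by_cases hrel : Rel i f
  · rw [delta, if_pos hrel, one_mul]
    exact stmt13_main i m h1 h2 r hr (relSet f).card f le_rfl hrel
  · rw [delta, if_neg hrel, zero_mul]
    have := aux_infl_nonneg f i
    have hrp : (0:ℝ) < (2:ℝ) ^ (-r) := Real.rpow_pos_of_pos (by norm_num) _
    positivity
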